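/- For N = 3 and p_1 = p_2, the volume of the Parrondo region for the pattern [1,1], namely the set of (p_0,p_3,p_1) ∈ (0,1)^3 with (3q_0 + 5q_3)/(2(3 + p_0 + q_3)) < p_1 ≤ q_3/(p_0 + q_3) (where q_m := 1−p_m), equals (100 ln 5 + 36 ln 3 − 276 ln 2 − 9)/8. -/

import Mathlib

open MeasureTheory Set

noncomputable def gP (a c : ℝ) : ℝ :=
  (1 - c) / (a + (1 - c)) - (3 * (1 - a) + 5 * (1 - c)) / (2 * (3 + a + (1 - c)))

noncomputable def Psi (a c : ℝ) : ℝ :=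
  (3 * (a + 1 - c) + 2 * a * Real.log (a + 1 - c)
      - (12 + 8 * a) * Real.log (a + 4 - c)) / 2

noncomputable def KK (a : ℝ) : ℝ := Psi a (max a (1 - a)) - Psi a (min a (1 - a))

noncomputable def FF (a : ℝ) : ℝ :=
  (6 * a - 3 + 2 * a * Real.log (2 * a)
      + (12 + 8 * a) * (Real.log 4 - Real.log (2 * a + 3))) / 2

noncomputable def GG (t : ℝ) : ℝ :=
  (-3 * t + 3 * t ^ 2 + (12 * t + 4 * t ^ 2) * Real.log 4 + t ^ 2 * Real.log (2 * t)
      - t ^ 2 / 2 - (2 * t + 3) ^ 2 * Real.log (2 * t + 3) + (2 * t + 3) ^ 2 / 2) / 2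

lemma psi_hasDeriv (a : ℝ) (ha : 0 < a) {c : ℝ} (hc : c < a + 1) :
    HasDerivAt (Psi a) (gP a c) c := by
  have h1 : (0:ℝ) < a + 1 - c := by linarith
  have h2 : (0:ℝ) < a + 4 - c := by linarith
  have hlin : HasDerivAt (fun c : ℝ => a + 1 - c) (-1) c := by
    simpa using (hasDerivAt_id c).const_sub (a + 1)
  have hlin2 : HasDerivAt (fun c : ℝ => a + 4 - c) (-1) c := by
    simpa using (hasDerivAt_id c).const_sub (a + 4)
  have hlog1 : HasDerivAt (fun c : ℝ => Real.log (a + 1 - c)) ((a + 1 - c)⁻¹ * (-1)) c :=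
    (Real.hasDerivAt_log h1.ne').comp c hlin
  have hlog2 : HasDerivAt (fun c : ℝ => Real.log (a + 4 - c)) ((a + 4 - c)⁻¹ * (-1)) c :=
    (Real.hasDerivAt_log h2.ne').comp c hlin2
  have H : HasDerivAt (fun c : ℝ =>
      (3 * (a + 1 - c) + 2 * a * Real.log (a + 1 - c)
        - (12 + 8 * a) * Real.log (a + 4 - c)) / 2)
      ((3 * (-1) + 2 * a * ((a + 1 - c)⁻¹ * (-1))
        - (12 + 8 * a) * ((a + 4 - c)⁻¹ * (-1))) / 2) c := by
    exact (((hlin.const_mul 3).add (hlog1.const_mul (2 * a))).sub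
      (hlog2.const_mul (12 + 8 * a))).div_const 2
  have key : (3 * (-1:ℝ) + 2 * a * ((a + 1 - c)⁻¹ * (-1))
      - (12 + 8 * a) * ((a + 4 - c)⁻¹ * (-1))) / 2 = gP a c := by
    have d1 : a + (1 - c) ≠ 0 := by linarith
    have d2 : (3:ℝ) + a + (1 - c) ≠ 0 := by linarith
    rw [gP]
    field_simp
    ring
  rw [key] at H
  exact H

lemma gP_eq (a c : ℝ) (h1 : (0:ℝ) < a + 1 - c) :
    gP a c = 3 * (c - a) * (1 - a - c) / (2 * (a + 1 - c) * (a + 4 - c)) := by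
  have h2 : (0:ℝ) < a + 4 - c := by linarith
  have d1 : a + (1 - c) ≠ 0 := by linarith
  have d2 : (3:ℝ) + a + (1 - c) ≠ 0 := by linarith
  rw [gP]
  field_simp
  ring

lemma max_lt_add_one {a : ℝ} (ha0 : 0 < a) : max a (1 - a) < a + 1 :=
  max_lt (by linarith) (by linarith)

lemma gP_nonneg {a c : ℝ} (ha0 : 0 < a)
    (hc : c ∈ Set.Ioo (min a (1 - a)) (max a (1 - a))) : 0 ≤ gP a c := by
  have hlt : c < a + 1 := hc.2.trans (max_lt_add_one ha0)
  have h1 : (0:ℝ) < a + 1 - c := by linarith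
  rw [gP_eq a c h1]
  apply div_nonneg _ (by nlinarith)
  obtain ⟨hc1, hc2⟩ := hc
  rcases le_total a (1 - a) with h | h
  · rw [min_eq_left h] at hc1; rw [max_eq_right h] at hc2
    nlinarith
  · rw [min_eq_right h] at hc1; rw [max_eq_left h] at hc2
    nlinarith

lemma gP_nonpos {a c : ℝ} (ha0 : 0 < a) (hc1 : 0 < c) (hc2 : c < 1)
    (hnot : c ∉ Set.Ioo (min a (1 - a)) (max a (1 - a))) : gP a c ≤ 0 := by
  have h1 : (0:ℝ) < a + 1 - c := by linarith
  rw [gP_eq a c h1]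
  apply div_nonpos_of_nonpos_of_nonneg _ (by nlinarith)
  rw [Set.mem_Ioo, not_and_or, not_lt, not_lt] at hnot
  rcases hnot with h | h
  · have ha : c ≤ a := h.trans (min_le_left _ _)
    have hb : c ≤ 1 - a := h.trans (min_le_right _ _)
    nlinarith
  · have ha : a ≤ c := (le_max_left a (1-a)).trans h
    have hb : 1 - a ≤ c := (le_max_right a (1-a)).trans h
    nlinarith

lemma gP_continuousOn {a : ℝ} (ha0 : 0 < a) :
    ContinuousOn (gP a) (Set.Icc (min a (1 - a)) (max a (1 - a))) := by
  apply ContinuousOn.sub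
  · apply ContinuousOn.div (by fun_prop) (by fun_prop)
    intro c hc
    have : c < a + 1 := lt_of_le_of_lt hc.2 (max_lt_add_one ha0)
    intro h; nlinarith [h]
  · apply ContinuousOn.div (by fun_prop) (by fun_prop)
    intro c hc
    have : c < a + 1 := lt_of_le_of_lt hc.2 (max_lt_add_one ha0)
    intro h; nlinarith [h]

lemma integral_gP_J {a : ℝ} (ha : a ∈ Set.Ioo (0:ℝ) 1) :
    ∫ c in Set.Ioo (min a (1 - a)) (max a (1 - a)), gP a c = KK a := by
  obtain ⟨ha0, ha1⟩ := ha
  have hle : min a (1 - a) ≤ max a (1 - a) := min_le_max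
  rw [← MeasureTheory.integral_Ioc_eq_integral_Ioo,
    ← intervalIntegral.integral_of_le hle]
  have hint : IntervalIntegrable (gP a) volume (min a (1-a)) (max a (1-a)) := by
    apply ContinuousOn.intervalIntegrable
    rw [Set.uIcc_of_le hle]
    exact gP_continuousOn ha0
  rw [intervalIntegral.integral_eq_sub_of_hasDerivAt (f := Psi a) ?_ hint]
  · rfl
  · intro c hc
    rw [Set.uIcc_of_le hle] at hc
    exact psi_hasDeriv a ha0 (lt_of_le_of_lt hc.2 (max_lt_add_one ha0))

lemma KK_nonneg {a : ℝ} (ha : a ∈ Set.Ioo (0:ℝ) 1) : 0 ≤ KK a := by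
  rw [← integral_gP_J ha]
  apply MeasureTheory.setIntegral_nonneg measurableSet_Ioo
  intro c hc
  exact gP_nonneg ha.1 hc

lemma KK_eq_F {a : ℝ} (ha : a ≤ 1/2) : KK a = FF a := by
  have h : a ≤ 1 - a := by linarith
  rw [KK, min_eq_left h, max_eq_right h, Psi, Psi, FF]
  have e1 : a + 1 - (1 - a) = 2 * a := by ring
  have e2 : a + 4 - (1 - a) = 2 * a + 3 := by ring
  have e3 : a + 1 - a = 1 := by ring
  have e4 : a + 4 - a = 4 := by ring
  rw [e1, e2, e3, e4, Real.log_one]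
  ring

lemma KK_eq_negF {a : ℝ} (ha : 1/2 ≤ a) : KK a = - FF a := by
  have h : 1 - a ≤ a := by linarith
  rw [KK, min_eq_right h, max_eq_left h, Psi, Psi, FF]
  have e1 : a + 1 - (1 - a) = 2 * a := by ring
  have e2 : a + 4 - (1 - a) = 2 * a + 3 := by ring
  have e3 : a + 1 - a = 1 := by ring
  have e4 : a + 4 - a = 4 := by ring
  rw [e1, e2, e3, e4, Real.log_one]
  ring

lemma contFF : ContinuousOn FF (Set.Ici (0:ℝ)) := by
  unfold FF
  apply ContinuousOn.div_const
  apply ContinuousOn.add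
  · apply ContinuousOn.add (by fun_prop)
    exact (Real.Continuous.mul_log (by fun_prop)).continuousOn
  · apply ContinuousOn.mul (by fun_prop)
    apply ContinuousOn.sub continuousOn_const
    apply ContinuousOn.log (by fun_prop)
    intro x hx
    have : (0:ℝ) ≤ x := hx
    positivity

lemma contGG : ContinuousOn GG (Set.Ici (0:ℝ)) := by
  have h : GG = fun t => (-3 * t + 3 * t ^ 2 + (12 * t + 4 * t ^ 2) * Real.log 4
      + (t / 2) * ((2 * t) * Real.log (2 * t)) - t ^ 2 / 2
      - (2 * t + 3) ^ 2 * Real.log (2 * t + 3) + (2 * t + 3) ^ 2 / 2) / 2 := by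
    funext t; rw [GG]; ring
  rw [h]
  apply ContinuousOn.div_const
  apply ContinuousOn.add
  apply ContinuousOn.sub
  apply ContinuousOn.sub
  apply ContinuousOn.add
  · fun_prop
  · exact (continuous_id.div_const 2).continuousOn.mul
      (Real.Continuous.mul_log (by fun_prop)).continuousOn
  · fun_prop
  · apply ContinuousOn.mul (by fun_prop)
    apply ContinuousOn.log (by fun_prop)
    intro x hx
    have : (0:ℝ) ≤ x := hx
    positivity
  · fun_prop

lemma GG_hasDeriv {t : ℝ} (ht : 0 < t) : HasDerivAt GG (FF t) t := by
  have h2t : (2:ℝ) * t ≠ 0 := by positivity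
  have h3t : (2:ℝ) * t + 3 ≠ 0 := by positivity
  have hlin : HasDerivAt (fun x : ℝ => 2 * x) 2 t := by
    simpa using (hasDerivAt_id t).const_mul (2:ℝ)
  have hlin3 : HasDerivAt (fun x : ℝ => 2 * x + 3) 2 t := hlin.add_const 3
  have hlogt : HasDerivAt (fun x : ℝ => Real.log (2 * x)) ((2 * t)⁻¹ * 2) t :=
    (Real.hasDerivAt_log h2t).comp t hlin
  have hlog3 : HasDerivAt (fun x : ℝ => Real.log (2 * x + 3)) ((2 * t + 3)⁻¹ * 2) t :=
    by have := (Real.hasDerivAt_log h3t).comp t hlin3; exact this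
  have t1 := (hasDerivAt_id t).const_mul (-3:ℝ)
  have t2 := (hasDerivAt_pow 2 t).const_mul (3:ℝ)
  have t3 := (((hasDerivAt_id t).const_mul (12:ℝ)).add
      ((hasDerivAt_pow 2 t).const_mul (4:ℝ))).mul_const (Real.log 4)
  have t4 := (hasDerivAt_pow 2 t).mul hlogt
  have t5 := (hasDerivAt_pow 2 t).div_const 2
  have t6 := (hlin3.pow 2).mul hlog3
  have t7 := (hlin3.pow 2).div_const 2
  have H := (((((t1.add t2).add t3).add t4).sub t5).sub t6).add t7
  exact (H.div_const 2).congr_deriv (by rw [FF]; push_cast; simp only [Pi.pow_apply]; field_simp; ring)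

lemma int_FF_1 : ∫ t in (0:ℝ)..(1/2), FF t = GG (1/2) - GG 0 := by
  apply intervalIntegral.integral_eq_sub_of_hasDerivAt_of_le (by norm_num)
  · exact contGG.mono (fun x hx => hx.1)
  · intro x hx; exact GG_hasDeriv hx.1
  · apply ContinuousOn.intervalIntegrable
    rw [Set.uIcc_of_le (by norm_num)]
    exact contFF.mono (fun x hx => hx.1)

lemma int_FF_2 : ∫ t in (1/2:ℝ)..1, FF t = GG 1 - GG (1/2) := by
  apply intervalIntegral.integral_eq_sub_of_hasDerivAt_of_le (by norm_num)
  · exact contGG.mono (fun x hx => le_trans (by norm_num) hx.1)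
  · intro x hx; exact GG_hasDeriv (lt_trans (by norm_num) hx.1)
  · apply ContinuousOn.intervalIntegrable
    rw [Set.uIcc_of_le (by norm_num)]
    exact contFF.mono (fun x hx => le_trans (by norm_num) hx.1)

lemma KK_int_1 : IntegrableOn KK (Set.Ioc (0:ℝ) (1/2)) := by
  refine IntegrableOn.congr_fun ?_ (fun x hx => (KK_eq_F hx.2).symm) measurableSet_Ioc
  exact ((contFF.mono (fun x (hx : x ∈ Set.Icc (0:ℝ) (1/2)) => hx.1)).integrableOn_Icc).mono_set
    Set.Ioc_subset_Icc_self

lemma KK_int_2 : IntegrableOn KK (Set.Ioc (1/2:ℝ) 1) := by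
  refine IntegrableOn.congr_fun ?_ (fun x hx => (KK_eq_negF hx.1.le).symm) measurableSet_Ioc
  refine (IntegrableOn.mono_set ?_ Set.Ioc_subset_Icc_self)
  exact ((contFF.mono (fun x (hx : x ∈ Set.Icc (1/2:ℝ) 1) =>
    le_trans (by norm_num) hx.1)).neg).integrableOn_Icc

lemma log4_eq : Real.log 4 = 2 * Real.log 2 := by
  rw [show (4:ℝ) = 2^2 by norm_num, Real.log_pow]
  push_cast; ring

lemma integral_KK : ∫ a in Set.Ioo (0:ℝ) 1, KK a
    = (100 * Real.log 5 + 36 * Real.log 3 - 276 * Real.log 2 - 9) / 8 := by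
  have h1 : IntervalIntegrable KK volume 0 (1/2) := by
    rw [intervalIntegrable_iff_integrableOn_Ioc_of_le (by norm_num)]; exact KK_int_1
  have h2 : IntervalIntegrable KK volume (1/2) 1 := by
    rw [intervalIntegrable_iff_integrableOn_Ioc_of_le (by norm_num)]; exact KK_int_2
  rw [← MeasureTheory.integral_Ioc_eq_integral_Ioo,
    ← intervalIntegral.integral_of_le (by norm_num : (0:ℝ) ≤ 1),
    ← intervalIntegral.integral_add_adjacent_intervals h1 h2]
  have e1 : ∫ t in (0:ℝ)..(1/2), KK t = ∫ t in (0:ℝ)..(1/2), FF t := by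
    apply intervalIntegral.integral_congr
    intro x hx
    rw [Set.uIcc_of_le (by norm_num)] at hx
    exact KK_eq_F hx.2
  have e2 : ∫ t in (1/2:ℝ)..1, KK t = ∫ t in (1/2:ℝ)..1, (fun t => - FF t) t := by
    apply intervalIntegral.integral_congr
    intro x hx
    rw [Set.uIcc_of_le (by norm_num)] at hx
    exact KK_eq_negF hx.1
  rw [e1, e2, int_FF_1]
  simp only [intervalIntegral.integral_neg]
  rw [int_FF_2]
  rw [GG, GG, GG]
  norm_num [Real.log_one, Real.log_zero, log4_eq]
  ring_nf

/-- For `N = 3` and `p_1 = p_2`, the volume of the Parrondo region for the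
pattern `[1,1]`, namely the set of `(p_0,p_3,p_1) ∈ (0,1)^3` with
`(3q_0 + 5q_3)/(2(3 + p_0 + q_3)) < p_1 ≤ q_3/(p_0 + q_3)` (`q_m := 1 − p_m`), equals
`(100 ln 5 + 36 ln 3 − 276 ln 2 − 9)/8`. -/
theorem stmt_17 :
    volume {v : ℝ × ℝ × ℝ |
        (v.1 ∈ Set.Ioo (0 : ℝ) 1 ∧ v.2.1 ∈ Set.Ioo (0 : ℝ) 1 ∧
          v.2.2 ∈ Set.Ioo (0 : ℝ) 1) ∧
        (3 * (1 - v.1) + 5 * (1 - v.2.1)) / (2 * (3 + v.1 + (1 - v.2.1))) < v.2.2 ∧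
        v.2.2 ≤ (1 - v.2.1) / (v.1 + (1 - v.2.1))} =
      ENNReal.ofReal
        ((100 * Real.log 5 + 36 * Real.log 3 - 276 * Real.log 2 - 9) / 8) := by
  set S : Set (ℝ × ℝ × ℝ) := {v : ℝ × ℝ × ℝ |
        (v.1 ∈ Set.Ioo (0 : ℝ) 1 ∧ v.2.1 ∈ Set.Ioo (0 : ℝ) 1 ∧
          v.2.2 ∈ Set.Ioo (0 : ℝ) 1) ∧
        (3 * (1 - v.1) + 5 * (1 - v.2.1)) / (2 * (3 + v.1 + (1 - v.2.1))) < v.2.2 ∧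
        v.2.2 ≤ (1 - v.2.1) / (v.1 + (1 - v.2.1))} with hSdef
  have hS : MeasurableSet S := by
    have h1 : Measurable fun v : ℝ × ℝ × ℝ =>
        (3 * (1 - v.1) + 5 * (1 - v.2.1)) / (2 * (3 + v.1 + (1 - v.2.1))) := by fun_prop
    have h2 : Measurable fun v : ℝ × ℝ × ℝ => v.2.2 := by fun_prop
    have h3 : Measurable fun v : ℝ × ℝ × ℝ =>
        (1 - v.2.1) / (v.1 + (1 - v.2.1)) := by fun_prop
    exact ((measurable_fst measurableSet_Ioo).inter
        (((measurable_fst.comp measurable_snd) measurableSet_Ioo).inter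
          ((measurable_snd.comp measurable_snd) measurableSet_Ioo))).inter
      ((measurableSet_lt h1 h2).inter (measurableSet_le h2 h3))
  have key : ∀ a : ℝ, (volume : Measure (ℝ × ℝ)) (Prod.mk a ⁻¹' S)
      = Set.indicator (Set.Ioo 0 1) (fun a => ENNReal.ofReal (KK a)) a := by
    intro a
    by_cases ha : a ∈ Set.Ioo (0:ℝ) 1
    · rw [Set.indicator_of_mem ha]
      rw [Measure.volume_eq_prod,
        Measure.prod_apply (measurable_prodMk_left hS)]
      have hslice : ∀ c : ℝ, (volume : Measure ℝ) (Prod.mk c ⁻¹' (Prod.mk a ⁻¹' S))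
          = Set.indicator (Set.Ioo 0 1) (fun c => ENNReal.ofReal (gP a c)) c := by
        intro c
        by_cases hc : c ∈ Set.Ioo (0:ℝ) 1
        · rw [Set.indicator_of_mem hc]
          have hset : Prod.mk c ⁻¹' (Prod.mk a ⁻¹' S)
              = Set.Ioc ((3 * (1 - a) + 5 * (1 - c)) / (2 * (3 + a + (1 - c))))
                  ((1 - c) / (a + (1 - c))) := by
            obtain ⟨ha0, ha1⟩ := ha
            obtain ⟨hc0, hc1⟩ := hc
            ext z
            simp only [hSdef, Set.mem_preimage, Set.mem_setOf_eq, Set.mem_Ioo, Set.mem_Ioc]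
            constructor
            · rintro ⟨_, h1, h2⟩; exact ⟨h1, h2⟩
            · rintro ⟨h1, h2⟩
              have hL : 0 ≤ (3 * (1 - a) + 5 * (1 - c)) / (2 * (3 + a + (1 - c))) := by
                apply div_nonneg <;> nlinarith
              have hU : (1 - c) / (a + (1 - c)) < 1 := by
                rw [div_lt_one (by nlinarith)]; nlinarith
              exact ⟨⟨⟨ha0, ha1⟩, ⟨hc0, hc1⟩, lt_of_le_of_lt hL h1, lt_of_le_of_lt h2 hU⟩, h1, h2⟩
          rw [hset, Real.volume_Ioc]
          rfl
        · rw [Set.indicator_of_notMem hc]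
          have : Prod.mk c ⁻¹' (Prod.mk a ⁻¹' S) = ∅ :=
            Set.eq_empty_iff_forall_notMem.2 fun z hz => hc hz.1.2.1
          rw [this]; simp
      rw [lintegral_congr hslice, lintegral_indicator measurableSet_Ioo]
      have hJsub : Set.Ioo (min a (1-a)) (max a (1-a)) ⊆ Set.Ioo (0:ℝ) 1 :=
        Set.Ioo_subset_Ioo (le_of_lt (lt_min ha.1 (by linarith [ha.2])))
          (le_of_lt (max_lt ha.2 (by linarith [ha.1])))
      have hstep : ∫⁻ c in Set.Ioo (0:ℝ) 1, ENNReal.ofReal (gP a c)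
          = ∫⁻ c in Set.Ioo (0:ℝ) 1,
              Set.indicator (Set.Ioo (min a (1-a)) (max a (1-a)))
                (fun c => ENNReal.ofReal (gP a c)) c := by
        apply setLIntegral_congr_fun measurableSet_Ioo
        intro c hc
        dsimp only
        by_cases hcJ : c ∈ Set.Ioo (min a (1-a)) (max a (1-a))
        · rw [Set.indicator_of_mem hcJ]
        · rw [Set.indicator_of_notMem hcJ,
            ENNReal.ofReal_eq_zero.2 (gP_nonpos ha.1 hc.1 hc.2 hcJ)]
      rw [hstep, lintegral_indicator measurableSet_Ioo,
        Measure.restrict_restrict measurableSet_Ioo,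
        Set.inter_eq_self_of_subset_left hJsub]
      have hInt : IntegrableOn (gP a) (Set.Ioo (min a (1-a)) (max a (1-a))) :=
        ((gP_continuousOn ha.1).integrableOn_Icc).mono_set Set.Ioo_subset_Icc_self
      have hae : 0 ≤ᵐ[volume.restrict (Set.Ioo (min a (1-a)) (max a (1-a)))] gP a :=
        (ae_restrict_iff' measurableSet_Ioo).2 (ae_of_all _ fun c hc => gP_nonneg ha.1 hc)
      rw [← MeasureTheory.ofReal_integral_eq_lintegral_ofReal hInt hae, integral_gP_J ha]
    · rw [Set.indicator_of_notMem ha]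
      have : Prod.mk a ⁻¹' S = ∅ :=
        Set.eq_empty_iff_forall_notMem.2 fun p hp => ha hp.1.1
      rw [this]; simp
  rw [Measure.volume_eq_prod, Measure.prod_apply hS]
  rw [lintegral_congr key, lintegral_indicator measurableSet_Ioo]
  have hae : 0 ≤ᵐ[volume.restrict (Set.Ioo (0:ℝ) 1)] KK :=
    (ae_restrict_iff' measurableSet_Ioo).2 (ae_of_all _ fun a ha => KK_nonneg ha)
  have hInt : IntegrableOn KK (Set.Ioo (0:ℝ) 1) := by
    have hsub : Set.Ioo (0:ℝ) 1 ⊆ Set.Ioc 0 (1/2) ∪ Set.Ioc (1/2) 1 := by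
      intro x hx
      rcases le_total x (1/2) with h | h
      · exact Or.inl ⟨hx.1, h⟩
      · rcases eq_or_lt_of_le h with h' | h'
        · exact Or.inl ⟨hx.1, h'.ge⟩
        · exact Or.inr ⟨h', hx.2.le⟩
    exact (KK_int_1.union KK_int_2).mono_set hsub
  rw [← MeasureTheory.ofReal_integral_eq_lintegral_ofReal hInt hae, integral_KK]
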